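/- arXiv:2108.13128 — 2 statements merged into one kernel-verified Lean document; each statement's English description precedes it below -/
import Mathlib

section
/- Let μ be a finite measure on a measurable space X, let C > 0, let (p_k) be a sequence of real numbers with p_k → ∞, and let g_k : X → ℝ^N be measurable functions with ∫_X ‖g_k‖^{p_k} dμ ≤ p_k · C for every k. If g_k(x) → g(x) for μ-almost every x ∈ X, then ‖g(x)‖ ≤ 1 for μ-almost every x ∈ X. -/
open MeasureTheory Filter

/-- Auxiliary: `b^t / (t*C) → ∞` for `b > 1`, `C > 0`. -/
lemma aux_tendsto {b C : ℝ} (hb : 1 < b) (hC : 0 < C) :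
    Tendsto (fun t : ℝ => b ^ t * (t * C)⁻¹) atTop atTop := by
  have ha : 0 < Real.log b := Real.log_pos hb
  have h1 : Tendsto (fun s : ℝ => Real.exp s / s) atTop atTop := by
    simpa using Real.tendsto_exp_div_pow_atTop 1
  have h2 : Tendsto (fun t : ℝ => Real.log b * t) atTop atTop :=
    (tendsto_id.const_mul_atTop ha)
  have h3 := (h1.comp h2).atTop_mul_const (div_pos ha hC)
  refine h3.congr' ?_
  filter_upwards [eventually_gt_atTop (0 : ℝ)] with t ht
  have hb0 : 0 < b := lt_trans one_pos hb
  rw [Real.rpow_def_of_pos hb0]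
  simp only [Function.comp]
  field_simp

/-- If `μ` is a finite measure, `p k → ∞`, `∫ ‖g k‖^(p k) dμ ≤ p k * C`, and `g k → g`
`μ`-a.e., then `‖g x‖ ≤ 1` for `μ`-a.e. `x`. -/
theorem statement3 {X : Type*} [MeasurableSpace X] (μ : Measure X) [IsFiniteMeasure μ]
    {N : ℕ} (C : ℝ) (hC : 0 < C) (p : ℕ → ℝ) (hp : Tendsto p atTop atTop)
    (g : ℕ → X → EuclideanSpace ℝ (Fin N)) (hgmeas : ∀ k, Measurable (g k))
    (hint : ∀ k, ∫⁻ x, (‖g k x‖₊ : ENNReal) ^ (p k) ∂μ ≤ ENNReal.ofReal (p k * C))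
    (G : X → EuclideanSpace ℝ (Fin N))
    (hconv : ∀ᵐ x ∂μ, Tendsto (fun k => g k x) atTop (nhds (G x))) :
    ∀ᵐ x ∂μ, ‖G x‖ ≤ 1 := by
  set F : ℕ → X → ENNReal :=
    fun k x => (‖g k x‖₊ : ENNReal) ^ (p k) * (ENNReal.ofReal (p k * C))⁻¹ with hF
  have hFmeas : ∀ k, Measurable (F k) := by
    intro k
    exact (((hgmeas k).nnnorm.coe_nnreal_ennreal).pow_const _).mul_const _
  have hFint : ∀ k, ∫⁻ x, F k x ∂μ ≤ 1 := by
    intro k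
    rw [hF]
    rw [lintegral_mul_const _ (((hgmeas k).nnnorm.coe_nnreal_ennreal).pow_const _)]
    calc (∫⁻ x, (‖g k x‖₊ : ENNReal) ^ (p k) ∂μ) * (ENNReal.ofReal (p k * C))⁻¹
        ≤ ENNReal.ofReal (p k * C) * (ENNReal.ofReal (p k * C))⁻¹ :=
          mul_le_mul_left (hint k) _
      _ ≤ 1 := ENNReal.mul_inv_le_one _
  have hlim : ∫⁻ x, liminf (fun k => F k x) atTop ∂μ ≤ 1 := by
    refine le_trans (lintegral_liminf_le hFmeas) ?_
    refine le_trans (liminf_le_liminf (Eventually.of_forall hFint)) ?_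
    simp [liminf_const]
  have hae : ∀ᵐ x ∂μ, liminf (fun k => F k x) atTop < ⊤ := by
    refine ae_lt_top (Measurable.liminf hFmeas) (ne_top_of_le_ne_top ENNReal.one_ne_top hlim)
  filter_upwards [hconv, hae] with x hx hxlt
  by_contra h
  push_neg at h
  -- b strictly between 1 and ‖G x‖
  set b : ℝ := (1 + ‖G x‖) / 2 with hb
  have hb1 : 1 < b := by rw [hb]; linarith
  have hbG : b < ‖G x‖ := by rw [hb]; linarith
  have hb0 : (0:ℝ) < b := lt_trans one_pos hb1
  -- eventually ‖g k x‖ ≥ b and p k ≥ 1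
  have hev1 : ∀ᶠ k in atTop, b ≤ ‖g k x‖ := by
    have := (hx.norm).eventually (eventually_gt_nhds hbG)
    filter_upwards [this] with k hk using hk.le
  have hev2 : ∀ᶠ k in atTop, (1:ℝ) ≤ p k := hp.eventually_ge_atTop 1
  -- lower bound for F k x
  have hlow : ∀ᶠ k in atTop,
      ENNReal.ofReal (b ^ (p k) * (p k * C)⁻¹) ≤ F k x := by
    filter_upwards [hev1, hev2] with k hk1 hk2
    have hpk : (0:ℝ) < p k := lt_of_lt_of_le one_pos hk2
    have hpkC : (0:ℝ) < p k * C := mul_pos hpk hC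
    have h1 : ENNReal.ofReal (b ^ (p k)) ≤ (‖g k x‖₊ : ENNReal) ^ (p k) := by
      rw [← ENNReal.ofReal_rpow_of_pos hb0, ← enorm_eq_nnnorm, ← ofReal_norm]
      exact ENNReal.rpow_le_rpow (ENNReal.ofReal_le_ofReal hk1) hpk.le
    have h2 : ENNReal.ofReal (b ^ (p k) * (p k * C)⁻¹)
        = ENNReal.ofReal (b ^ (p k)) * (ENNReal.ofReal (p k * C))⁻¹ := by
      rw [ENNReal.ofReal_mul (Real.rpow_nonneg hb0.le _), ENNReal.ofReal_inv_of_pos hpkC]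
    rw [h2]
    exact mul_le_mul_left h1 _
  -- the lower bound tends to ⊤
  have htop : Tendsto (fun k => ENNReal.ofReal (b ^ (p k) * (p k * C)⁻¹)) atTop (nhds ⊤) :=
    ENNReal.tendsto_ofReal_atTop.comp ((aux_tendsto hb1 hC).comp hp)
  have : liminf (fun k => F k x) atTop = ⊤ := by
    refine top_le_iff.mp ?_
    calc (⊤ : ENNReal) = liminf (fun k => ENNReal.ofReal (b ^ (p k) * (p k * C)⁻¹)) atTop :=
          (htop.liminf_eq).symm
      _ ≤ liminf (fun k => F k x) atTop := liminf_le_liminf hlow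
  exact absurd this hxlt.ne
end

section
/- Define K = {(a,b) ∈ ℝ² : |b − a| ≤ 1}, f = (0,1) ∈ ℝ², and u : [0,∞) → ℝ² by u(t) = (0, t) for 0 ≤ t ≤ 1 and u(t) = ((t−1)/2, (t−1)/2 + 1) for t ≥ 1. Then: (i) u(0) = (0,0); (ii) u is continuous on [0,∞); (iii) u(t) ∈ K for every t ≥ 0; (iv) for every t > 0 with t ≠ 1, u is differentiable at t and ⟨f − u'(t), w − u(t)⟩ ≤ 0 for every w ∈ K, where ⟨·,·⟩ is the Euclidean inner product on ℝ². -/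
open scoped RealInnerProductSpace

/-- The constraint set `K = {(a,b) ∈ ℝ² : |b - a| ≤ 1}`, viewed in `ℝ²` with the Euclidean
inner product. -/
noncomputable def sandpileK : Set (EuclideanSpace ℝ (Fin 2)) :=
  {w | |w 1 - w 0| ≤ 1}

/-- The source `f = (0,1)`. -/
noncomputable def sandpileF : EuclideanSpace ℝ (Fin 2) := !₂[0, 1]

/-- The explicit solution of Example 1: `u(t) = (0,t)` for `0 ≤ t ≤ 1` and
`u(t) = ((t-1)/2, (t-1)/2 + 1)` for `t ≥ 1`. -/
noncomputable def sandpileU : ℝ → EuclideanSpace ℝ (Fin 2) := fun t =>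
  if t ≤ 1 then !₂[0, t] else !₂[(t - 1) / 2, (t - 1) / 2 + 1]

lemma sandpile_hasDerivAt_line (v b : EuclideanSpace ℝ (Fin 2)) (t : ℝ) :
    HasDerivAt (fun s : ℝ => s • v + b) v t := by
  simpa using ((hasDerivAt_id t).smul_const v).add_const b

lemma sandpile_cont_line (v b : EuclideanSpace ℝ (Fin 2)) :
    Continuous (fun s : ℝ => s • v + b) :=
  (continuous_id.smul continuous_const).add continuous_const

lemma sandpile_aux1 (t : ℝ) :
    (!₂[0, t] : EuclideanSpace ℝ (Fin 2)) =
      t • (!₂[0, 1] : EuclideanSpace ℝ (Fin 2)) + (!₂[0, 0] : EuclideanSpace ℝ (Fin 2)) := by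
  ext i; fin_cases i <;> simp

lemma sandpile_aux2 (t : ℝ) :
    (!₂[(t - 1) / 2, (t - 1) / 2 + 1] : EuclideanSpace ℝ (Fin 2)) =
      t • (!₂[1/2, 1/2] : EuclideanSpace ℝ (Fin 2)) +
        (!₂[-(1/2), 1/2] : EuclideanSpace ℝ (Fin 2)) := by
  ext i; fin_cases i
  · simp; ring
  · simp; ring

lemma sandpile_deriv_lt {t : ℝ} (ht : t < 1) :
    HasDerivAt sandpileU sandpileF t := by
  rw [sandpileF]; apply (sandpile_hasDerivAt_line !₂[0, 1] !₂[0, 0] t).congr_of_eventuallyEq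
  filter_upwards [eventually_lt_nhds ht] with s hs
  rw [sandpileU, if_pos hs.le, sandpile_aux1]

lemma sandpile_deriv_gt {t : ℝ} (ht : 1 < t) :
    HasDerivAt sandpileU (!₂[1/2, 1/2] : EuclideanSpace ℝ (Fin 2)) t := by
  apply (sandpile_hasDerivAt_line !₂[1/2, 1/2] !₂[-(1/2), 1/2] t).congr_of_eventuallyEq
  filter_upwards [eventually_gt_nhds ht] with s hs
  rw [sandpileU, if_neg (not_le.mpr hs), sandpile_aux2]

theorem statement7 :
    sandpileU 0 = !₂[0, 0] ∧
    ContinuousOn sandpileU (Set.Ici (0 : ℝ)) ∧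
    (∀ t : ℝ, 0 ≤ t → sandpileU t ∈ sandpileK) ∧
    (∀ t : ℝ, 0 < t → t ≠ 1 →
      DifferentiableAt ℝ sandpileU t ∧
      ∀ w ∈ sandpileK, ⟪sandpileF - deriv sandpileU t, w - sandpileU t⟫ ≤ 0) := by
  refine ⟨?_, ?_, ?_, ?_⟩
  · ext i; fin_cases i <;> norm_num [sandpileU]
  · have hc : Continuous sandpileU := by
      have h1 : Continuous (fun t : ℝ => (!₂[0, t] : EuclideanSpace ℝ (Fin 2))) := by
        rw [funext sandpile_aux1]; exact sandpile_cont_line _ _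
      have h2 : Continuous
          (fun t : ℝ => (!₂[(t - 1) / 2, (t - 1) / 2 + 1] : EuclideanSpace ℝ (Fin 2))) := by
        rw [funext sandpile_aux2]; exact sandpile_cont_line _ _
      exact h1.if_le h2 continuous_id continuous_const (by
        intro x hx; subst hx
        ext i; fin_cases i <;> norm_num)
    exact hc.continuousOn
  · intro t ht
    rw [sandpileU]
    split_ifs with h
    · show |t - 0| ≤ 1
      rw [abs_le]; constructor <;> linarith
    · show |(t - 1) / 2 + 1 - (t - 1) / 2| ≤ 1
      norm_num
  · intro t ht ht1
    rcases lt_or_gt_of_ne ht1 with h | h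
    · have hd := sandpile_deriv_lt h
      refine ⟨hd.differentiableAt, fun w hw => ?_⟩
      rw [hd.deriv, sub_self]
      simp
    · have hd := sandpile_deriv_gt h
      refine ⟨hd.differentiableAt, fun w hw => ?_⟩
      rw [hd.deriv]
      have hK : |w 1 - w 0| ≤ 1 := hw
      have h0 : w 1 - w 0 ≤ 1 := (abs_le.mp hK).2
      have hu : sandpileU t = (!₂[(t - 1) / 2, (t - 1) / 2 + 1] : EuclideanSpace ℝ (Fin 2)) := by
        rw [sandpileU, if_neg (not_le.mpr h)]
      rw [hu]
      simp only [PiLp.inner_apply, Fin.sum_univ_two, PiLp.sub_apply, RCLike.inner_apply,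
        conj_trivial, sandpileF]
      simp only [Matrix.cons_val_zero, Matrix.cons_val_one, Matrix.head_cons]
      nlinarith
end
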